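/- Let d ≢ 1 (mod p), e_1, …, e_d linearly independent in 𝔽_p^d, and A = {e_1, …, e_d, e_1 + ⋯ + e_d}. Then: (i) every element of 𝔽_p^d is a sum of at most (d+1)(p−1)/2 elements of A; (ii) (d(p−1)−1)A ≠ 𝔽_p^d; (iii) d(p−1)A = 𝔽_p^d. -/

import Mathlib

open Pointwise

/-- `itSum A n` is the `n`-fold sumset of `A` (sums of exactly `n` elements of `A`). -/
def itSum {G : Type*} [AddCommGroup G] (A : Set G) : ℕ → Set G
  | 0 => {0}
  | n + 1 => itSum A n + A

/-- `SimEq A B` means the symmetric difference of `A` and `B` is finite. -/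
def SimEq {G : Type*} [AddCommGroup G] (A B : Set G) : Prop :=
  (symmDiff A B).Finite

lemma aux_delta_sum {G : Type*} [AddCommGroup G] {d : ℕ} (e : Fin d → G) (j : Fin d) :
    ∑ i, (if i = j then 1 else 0 : ℕ) • e i = e j := by
  rw [Finset.sum_eq_single j] <;> simp +contextual

lemma aux_mem_itSum {G : Type*} [AddCommGroup G] {d : ℕ} (e : Fin d → G) (A : Set G)
    (hA : A = Set.range e ∪ {∑ i, e i}) (n : ℕ) (x : G) :
    x ∈ itSum A n ↔ ∃ (m : ℕ) (a : Fin d → ℕ), m + ∑ i, a i = n ∧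
      x = m • (∑ i, e i) + ∑ i, a i • e i := by
  induction n generalizing x with
  | zero =>
    constructor
    · rintro rfl
      exact ⟨0, 0, by simp, by simp⟩
    · rintro ⟨m, a, hsum, rfl⟩
      have hm : m = 0 := Nat.eq_zero_of_add_eq_zero_right hsum
      have ha : ∀ i ∈ Finset.univ, a i = 0 :=
        (Finset.sum_eq_zero_iff).1 (Nat.eq_zero_of_add_eq_zero_left hsum)
      simp only [itSum, Set.mem_singleton_iff, hm, zero_smul, zero_add]
      refine Finset.sum_eq_zero fun i _ => by rw [ha i (Finset.mem_univ i), zero_smul]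
  | succ n ih =>
    constructor
    · intro hx
      obtain ⟨y, hy, z, hz, rfl⟩ := Set.mem_add.1 hx
      obtain ⟨m, a, hsum, rfl⟩ := ih y |>.1 hy
      rw [hA] at hz
      rcases hz with ⟨j, rfl⟩ | hz
      · refine ⟨m, fun i => a i + if i = j then 1 else 0, ?_, ?_⟩
        · rw [Finset.sum_add_distrib]
          simp [Finset.sum_ite_eq', ← hsum]; ring
        · rw [add_assoc]
          congr 1
          have : ∑ i, (a i + if i = j then 1 else 0) • e i
              = ∑ i, a i • e i + ∑ i, (if i = j then 1 else 0 : ℕ) • e i := by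
            rw [← Finset.sum_add_distrib]
            exact Finset.sum_congr rfl fun i _ => add_smul _ _ _
          rw [this, aux_delta_sum]
      · rcases hz with rfl
        exact ⟨m + 1, a, by omega, by rw [add_smul, one_smul]; abel⟩
    · rintro ⟨m, a, hsum, rfl⟩
      rcases Nat.eq_zero_or_pos m with rfl | hm
      · have hpos : 0 < ∑ i, a i := by omega
        obtain ⟨j, -, hj⟩ := Finset.exists_lt_of_sum_lt (f := fun _ => 0) (by simpa using hpos)
        set a' : Fin d → ℕ := fun i => if i = j then a j - 1 else a i with ha'
        have haeq : ∀ i, a i = a' i + if i = j then 1 else 0 := by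
          intro i
          rcases eq_or_ne i j with rfl | hij
          · simp [ha']; omega
          · simp [ha', hij]
        have hsum' : ∑ i, a i = (∑ i, a' i) + 1 := by
          rw [Finset.sum_congr rfl fun i _ => haeq i, Finset.sum_add_distrib]
          simp [Finset.sum_ite_eq']
        refine Set.mem_add.2 ⟨_, (ih _).2 ⟨0, a', by omega, rfl⟩, e j, ?_, ?_⟩
        · rw [hA]; exact Or.inl ⟨j, rfl⟩
        · rw [add_assoc]
          congr 1
          rw [Finset.sum_congr rfl fun i _ => (congrArg (· • e i) (haeq i)),
            Finset.sum_congr rfl fun i (_ : i ∈ Finset.univ) =>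
              add_smul (a' i) (if i = j then 1 else 0) (e i),
            Finset.sum_add_distrib, aux_delta_sum]
      · obtain ⟨m', rfl⟩ : ∃ m', m = m' + 1 := ⟨m - 1, by omega⟩
        refine Set.mem_add.2 ⟨_, (ih _).2 ⟨m', a, by omega, rfl⟩, ∑ i, e i, ?_, ?_⟩
        · rw [hA]; exact Or.inr rfl
        · rw [add_smul, one_smul]; abel

lemma aux_sum_range {p : ℕ} [NeZero p] (f : ZMod p → ℕ) :
    ∑ m ∈ Finset.range p, f (m : ZMod p) = ∑ z : ZMod p, f z := by
  refine Finset.sum_bij' (fun m _ => ((m : ZMod p))) (fun z _ => z.val) ?_ ?_ ?_ ?_ ?_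
  · intros; exact Finset.mem_univ _
  · intro z _; exact Finset.mem_range.2 (ZMod.val_lt z)
  · intro a ha
    exact ZMod.val_cast_of_lt (Finset.mem_range.1 ha)
  · intro z _; exact ZMod.natCast_rightInverse z
  · intros; rfl

lemma aux_sum_val {p : ℕ} [NeZero p] (c : ZMod p) :
    ∑ z : ZMod p, (c - z).val = ∑ z : ZMod p, z.val :=
  Fintype.sum_equiv (Equiv.subLeft c) _ _ (fun _ => rfl)

theorem stmt_17 (p : ℕ) [Fact p.Prime] (d : ℕ) (hd : 1 ≤ d)
    (hdp : (d : ZMod p) ≠ 1)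
    (e : Fin d → (Fin d → ZMod p)) (he : LinearIndependent (ZMod p) e)
    (A : Set (Fin d → ZMod p)) (hA : A = Set.range e ∪ {∑ i, e i}) :
    (∀ x : Fin d → ZMod p, ∃ i ≤ (d + 1) * (p - 1) / 2, x ∈ itSum A i) ∧
    itSum A (d * (p - 1) - 1) ≠ Set.univ ∧
    itSum A (d * (p - 1)) = Set.univ := by
  have hp2 : 2 ≤ p := (Fact.out : p.Prime).two_le
  haveI : NeZero p := ⟨by omega⟩
  have hne : Nonempty (Fin d) := ⟨⟨0, hd⟩⟩
  have hcard : Fintype.card (Fin d) = Module.finrank (ZMod p) (Fin d → ZMod p) := by simp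
  let b : Module.Basis (Fin d) (ZMod p) (Fin d → ZMod p) :=
    basisOfLinearIndependentOfCardEqFinrank he hcard
  have hb : ⇑b = e := coe_basisOfLinearIndependentOfCardEqFinrank he hcard
  have h2 : ∀ (t : Fin d → ZMod p) (j : Fin d), b.repr (∑ i, t i • e i) j = t j := by
    intro t j
    rw [← hb]
    simp [Finsupp.single_apply, Finset.sum_ite_eq]
  have h3 : ∀ x : Fin d → ZMod p, x = ∑ i, b.repr x i • e i := by
    intro x
    rw [← hb]
    exact (Module.Basis.sum_repr b x).symm
  have expand : ∀ (m : ℕ) (a : Fin d → ℕ),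
      (m • (∑ i, e i) + ∑ i, a i • e i : Fin d → ZMod p)
        = ∑ i, ((m : ZMod p) + (a i : ZMod p)) • e i := by
    intro m a
    rw [Finset.smul_sum, ← Finset.sum_add_distrib]
    refine Finset.sum_congr rfl fun i _ => ?_
    rw [add_smul, Nat.cast_smul_eq_nsmul, Nat.cast_smul_eq_nsmul]
  have key : ∀ (x : Fin d → ZMod p) (n : ℕ), x ∈ itSum A n ↔
      ∃ (m : ℕ) (a : Fin d → ℕ), m + ∑ i, a i = n ∧
        ∀ i, (m : ZMod p) + (a i : ZMod p) = b.repr x i := by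
    intro x n
    rw [aux_mem_itSum e A hA]
    constructor
    · rintro ⟨m, a, hs, rfl⟩
      exact ⟨m, a, hs, fun i => by rw [expand, h2]⟩
    · rintro ⟨m, a, hs, hr⟩
      refine ⟨m, a, hs, ?_⟩
      rw [expand]
      conv_lhs => rw [h3 x]
      exact Finset.sum_congr rfl fun i _ => by rw [hr i]
  have hval_le : ∀ z : ZMod p, z.val ≤ p - 1 := fun z => by have := ZMod.val_lt z; omega
  have hneg1 : ((p - 1 : ℕ) : ZMod p) = -1 := by
    rw [Nat.cast_sub (by omega), Nat.cast_one, ZMod.natCast_self, zero_sub]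
  have h1d : (1 - (d : ZMod p)) ≠ 0 := fun h => hdp (sub_eq_zero.mp h).symm
  -- cast of n = d*(p-1)
  have hcastn : ((d * (p - 1) : ℕ) : ZMod p) = -(d : ZMod p) := by
    push_cast
    rw [hneg1]; ring
  refine ⟨?_, ?_, ?_⟩
  · -- part (i)
    intro x
    set c : Fin d → ZMod p := fun i => b.repr x i with hc
    set cost : ℕ → ℕ := fun m => m + ∑ i, (c i - (m : ZMod p)).val with hcost
    obtain ⟨m₀, hm₀mem, hm₀min⟩ :=
      Finset.exists_min_image (Finset.range p) cost ⟨0, Finset.mem_range.2 (by omega)⟩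
    refine ⟨cost m₀, ?_, ?_⟩
    · -- bound
      have htot : ∑ m ∈ Finset.range p, cost m
          = (∑ m ∈ Finset.range p, m) + d * (∑ z : ZMod p, z.val) := by
        rw [hcost]
        rw [Finset.sum_add_distrib]
        congr 1
        rw [Finset.sum_comm]
        have : ∀ i : Fin d, ∑ m ∈ Finset.range p, (c i - (m : ZMod p)).val
            = ∑ z : ZMod p, z.val := by
          intro i
          exact (aux_sum_range (fun z => (c i - z).val)).trans (aux_sum_val (c i))
        rw [Finset.sum_congr rfl fun i _ => this i]
        simp [Finset.sum_const, mul_comm]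
      have hzval : ∑ z : ZMod p, z.val = ∑ m ∈ Finset.range p, m := by
        rw [← aux_sum_range (fun z => z.val)]
        exact Finset.sum_congr rfl fun m hm =>
          ZMod.val_cast_of_lt (Finset.mem_range.1 hm)
      have hgauss : (∑ m ∈ Finset.range p, m) * 2 = p * (p - 1) :=
        Finset.sum_range_id_mul_two p
      have hle : cost m₀ * p ≤ ∑ m ∈ Finset.range p, cost m := by
        calc cost m₀ * p = ∑ _m ∈ Finset.range p, cost m₀ := by
              simp [Finset.sum_const, mul_comm]
          _ ≤ ∑ m ∈ Finset.range p, cost m :=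
              Finset.sum_le_sum fun m hm => hm₀min m hm
      rw [htot, hzval] at hle
      have h2le : cost m₀ * p * 2 ≤ (1 + d) * (p * (p - 1)) := by
        calc cost m₀ * p * 2 ≤ ((∑ m ∈ Finset.range p, m) + d * ∑ m ∈ Finset.range p, m) * 2 :=
              Nat.mul_le_mul_right 2 hle
          _ = (1 + d) * ((∑ m ∈ Finset.range p, m) * 2) := by ring
          _ = (1 + d) * (p * (p - 1)) := by rw [hgauss]
      rw [Nat.le_div_iff_mul_le (by omega)]
      have : cost m₀ * 2 * p ≤ (d + 1) * (p - 1) * p := by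
        calc cost m₀ * 2 * p = cost m₀ * p * 2 := by ring
          _ ≤ (1 + d) * (p * (p - 1)) := h2le
          _ = (d + 1) * (p - 1) * p := by ring
      exact Nat.le_of_mul_le_mul_right this (by omega)
    · -- membership
      refine (key x (cost m₀)).2 ⟨m₀, fun i => (c i - (m₀ : ZMod p)).val, rfl, fun i => ?_⟩
      rw [ZMod.natCast_rightInverse _]
      show (m₀ : ZMod p) + (c i - (m₀ : ZMod p)) = c i
      ring
  · -- part (ii)
    intro hcontr
    set x₀ : Fin d → ZMod p := ∑ i, (-2 : ZMod p) • e i with hx₀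
    have hx₀mem : x₀ ∈ itSum A (d * (p - 1) - 1) := hcontr ▸ Set.mem_univ x₀
    obtain ⟨m, a, hs, hr⟩ := (key x₀ _).1 hx₀mem
    have hrepr : ∀ i, b.repr x₀ i = -2 := fun i => h2 (fun _ => (-2 : ZMod p)) i
    have hq1 : 1 ≤ d * (p - 1) := by
      have : 1 * 1 ≤ d * (p - 1) := Nat.mul_le_mul hd (by omega)
      omega
    -- cast the count equation
    have hcast : ((d * (p - 1) - 1 : ℕ) : ZMod p)
        = (m : ZMod p) + ∑ i, (a i : ZMod p) := by
      rw [← hs]; push_cast; ring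
    have hai : ∀ i, (a i : ZMod p) = -2 - (m : ZMod p) := by
      intro i
      have := hr i
      rw [hrepr i] at this
      linear_combination this
    have hcast2 : ((d * (p - 1) - 1 : ℕ) : ZMod p) = -(d : ZMod p) - 1 := by
      rw [Nat.cast_sub hq1, hcastn, Nat.cast_one]
    have hmu : (m : ZMod p) = -1 := by
      rw [hcast2] at hcast
      rw [Finset.sum_congr rfl fun i _ => hai i, Finset.sum_const] at hcast
      simp only [Finset.card_univ, Fintype.card_fin, nsmul_eq_mul] at hcast
      have h' : (1 - (d : ZMod p)) * ((m : ZMod p) + 1) = 0 := by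
        linear_combination -hcast
      rcases mul_eq_zero.1 h' with h'' | h''
      · exact absurd h'' h1d
      · linear_combination h''
    have hmge : p - 1 ≤ m := by
      have : m % p = (p - 1 : ℕ) % p := by
        have : ((m : ℕ) : ZMod p) = ((p - 1 : ℕ) : ZMod p) := by rw [hmu, hneg1]
        exact (ZMod.natCast_eq_natCast_iff _ _ _).1 this
      have h4 : (p - 1) % p = p - 1 := Nat.mod_eq_of_lt (by omega)
      have h5 : m % p ≤ m := Nat.mod_le m p
      omega
    have hage : ∀ i, p - 1 ≤ a i := by
      intro i
      have hv : (a i : ZMod p) = ((p - 1 : ℕ) : ZMod p) := by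
        rw [hai i, hmu, hneg1]; ring
      have : a i % p = (p - 1) % p := (ZMod.natCast_eq_natCast_iff _ _ _).1 hv
      have h4 : (p - 1) % p = p - 1 := Nat.mod_eq_of_lt (by omega)
      have h5 : a i % p ≤ a i := Nat.mod_le _ _
      omega
    have hsumge : d * (p - 1) ≤ ∑ i, a i := by
      calc d * (p - 1) = ∑ _i : Fin d, (p - 1) := by
            simp [Finset.sum_const, mul_comm]
        _ ≤ ∑ i, a i := Finset.sum_le_sum fun i _ => hage i
    omega
  · -- part (iii)
    ext x
    simp only [Set.mem_univ, iff_true]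
    set n := d * (p - 1) with hn
    set c : Fin d → ZMod p := fun i => b.repr x i with hc
    set μ : ZMod p := (1 - (d : ZMod p))⁻¹ * ((n : ZMod p) - ∑ i, c i) with hmu
    set a' : Fin d → ℕ := fun i => (c i - μ).val with ha'
    set cost : ℕ := μ.val + ∑ i, a' i with hcost
    have hcastcost : ((cost : ℕ) : ZMod p) = (n : ZMod p) := by
      rw [hcost]
      push_cast
      rw [ZMod.natCast_rightInverse μ]
      have : ∀ i, ((a' i : ℕ) : ZMod p) = c i - μ := fun i => ZMod.natCast_rightInverse _
      rw [Finset.sum_congr rfl fun i _ => this i, Finset.sum_sub_distrib, Finset.sum_const]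
      simp only [Finset.card_univ, Fintype.card_fin, nsmul_eq_mul]
      have hinv : (1 - (d : ZMod p)) * μ = (n : ZMod p) - ∑ i, c i := by
        rw [hmu, ← mul_assoc, mul_inv_cancel₀ h1d, one_mul]
      linear_combination hinv
    have hcostle : cost ≤ n + (p - 1) := by
      have h1 : μ.val ≤ p - 1 := hval_le μ
      have h2' : ∑ i, a' i ≤ d * (p - 1) := by
        calc ∑ i, a' i ≤ ∑ _i : Fin d, (p - 1) := Finset.sum_le_sum fun i _ => hval_le _
          _ = d * (p - 1) := by simp [Finset.sum_const, mul_comm]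
      omega
    have hmod : cost % p = n % p := (ZMod.natCast_eq_natCast_iff _ _ _).1 hcastcost
    have hcostn : cost ≤ n := by
      by_contra hlt
      push_neg at hlt
      have hdvd : p ∣ cost - n := (Nat.modEq_iff_dvd' (le_of_lt hlt)).1 hmod.symm
      have hpos : 0 < cost - n := by omega
      have : p ≤ cost - n := Nat.le_of_dvd hpos hdvd
      omega
    have hdvd : p ∣ n - cost := (Nat.modEq_iff_dvd' hcostn).1 hmod
    obtain ⟨k, hk⟩ := hdvd
    refine (key x n).2 ⟨μ.val + p * k, a', ?_, fun i => ?_⟩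
    · have : μ.val + ∑ i, a' i = cost := rfl
      omega
    · have h6 : ((μ.val + p * k : ℕ) : ZMod p) = μ := by
        push_cast [ZMod.natCast_self]
        rw [ZMod.natCast_rightInverse μ]
        ring
      have h7 : ((a' i : ℕ) : ZMod p) = c i - μ := ZMod.natCast_rightInverse _
      rw [h6, h7]
      show μ + (c i - μ) = c i
      ring
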